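/- For the Shuffle task with k = 2 and n even, the success probability is (n-1)!!/n!!, and this tends to 0 as n → ∞. -/

import Mathlib

open Filter Finset

lemma card_inj_fun (N : ℕ) :
    Nat.card {f : Fin 2 → Fin N // Function.Injective f} = N.descFactorial 2 := by
  rw [Nat.card_eq_fintype_card, Fintype.card_congr (Equiv.subtypeInjectiveEquivEmbedding (Fin 2) (Fin N)),
    Fintype.card_embedding_eq, Fintype.card_fin, Fintype.card_fin]

lemma prod_even (m : ℕ) : (∏ i : Fin m, (2 * m - 2 * (i : ℕ))) = Nat.doubleFactorial (2 * m) := by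
  induction m with
  | zero => simp [Nat.doubleFactorial]
  | succ m ih =>
    rw [Fin.prod_univ_succ]
    have h1 : ∀ i : Fin m, 2 * (m + 1) - 2 * ((i.succ : ℕ)) = 2 * m - 2 * (i : ℕ) := by
      intro i; simp only [Fin.val_succ]; omega
    rw [Finset.prod_congr rfl (fun i _ => h1 i), ih]
    have : 2 * (m + 1) = (2 * m) + 2 := by ring
    rw [this, Nat.doubleFactorial]
    simp

lemma dfo (m : ℕ) :
    Nat.doubleFactorial (2 * (m + 1) - 1) = (2 * m + 1) * Nat.doubleFactorial (2 * m - 1) := by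
  cases m with
  | zero => simp [Nat.doubleFactorial]
  | succ m =>
    have h1 : 2 * (m + 1 + 1) - 1 = (2 * (m + 1) - 1) + 2 := by omega
    rw [h1, Nat.doubleFactorial]
    congr 1 <;> omega

lemma prod_odd (m : ℕ) : (∏ i : Fin m, (2 * m - 2 * (i : ℕ) - 1)) = Nat.doubleFactorial (2 * m - 1) := by
  induction m with
  | zero => simp [Nat.doubleFactorial]
  | succ m ih =>
    rw [Fin.prod_univ_succ]
    have h1 : ∀ i : Fin m, 2 * (m + 1) - 2 * ((i.succ : ℕ)) - 1 = 2 * m - 2 * (i : ℕ) - 1 := by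
      intro i; simp only [Fin.val_succ]; omega
    rw [Finset.prod_congr rfl (fun i _ => h1 i), ih, dfo]
    simp only [Fin.val_zero, Nat.mul_zero, Nat.sub_zero]
    congr 1 <;> omega

lemma dfe (m : ℕ) :
    Nat.doubleFactorial (2 * (m + 1)) = (2 * m + 2) * Nat.doubleFactorial (2 * m) := by
  have h1 : 2 * (m + 1) = 2 * m + 2 := by ring
  rw [h1, Nat.doubleFactorial]

noncomputable def dd (m : ℕ) : ℝ :=
  (Nat.doubleFactorial (2 * m - 1) : ℝ) / (Nat.doubleFactorial (2 * m) : ℝ)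

lemma dd_nonneg (m : ℕ) : 0 ≤ dd m := by
  unfold dd; positivity

lemma dd_succ (m : ℕ) : dd (m + 1) = dd m * ((2 * m + 1) / (2 * m + 2)) := by
  unfold dd
  rw [dfo, dfe]
  push_cast
  have h1 : (0:ℝ) < (Nat.doubleFactorial (2 * m) : ℝ) := by
    exact_mod_cast Nat.doubleFactorial_pos _
  field_simp

lemma dd_sq_le (m : ℕ) : (dd m) ^ 2 ≤ 1 / (2 * m + 1) := by
  induction m with
  | zero => simp [dd, Nat.doubleFactorial]
  | succ m ih =>
    rw [dd_succ]
    have h0 : (0:ℝ) < 2 * (m:ℝ) + 1 := by positivity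
    have h2 : (0:ℝ) < 2 * (m:ℝ) + 2 := by positivity
    have h3 : (0:ℝ) < 2 * (m:ℝ) + 3 := by positivity
    have key : ((2 * (m:ℝ) + 1) / (2 * m + 2)) ^ 2 * (1 / (2 * m + 1)) ≤ 1 / (2 * m + 3) := by
      have e : ((2 * (m:ℝ) + 1) / (2 * m + 2)) ^ 2 * (1 / (2 * m + 1))
          = (2 * m + 1) / (2 * m + 2) ^ 2 := by
        field_simp
      rw [e, div_le_div_iff₀ (by positivity) h3]
      nlinarith
    have hle : (dd m * ((2 * m + 1) / (2 * m + 2))) ^ 2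
        ≤ ((2 * (m:ℝ) + 1) / (2 * m + 2)) ^ 2 * (1 / (2 * m + 1)) := by
      have hnn : (0:ℝ) ≤ ((2 * (m:ℝ) + 1) / (2 * m + 2)) ^ 2 := by positivity
      calc (dd m * ((2 * m + 1) / (2 * m + 2))) ^ 2
          = ((2 * (m:ℝ) + 1) / (2 * m + 2)) ^ 2 * (dd m) ^ 2 := by ring
        _ ≤ ((2 * (m:ℝ) + 1) / (2 * m + 2)) ^ 2 * (1 / (2 * m + 1)) :=
            mul_le_mul_of_nonneg_left ih hnn
    refine hle.trans (key.trans_eq ?_)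
    push_cast
    ring_nf

lemma dd_tendsto : Filter.Tendsto dd Filter.atTop (nhds 0) := by
  have hupper : ∀ m : ℕ, dd m ≤ Real.sqrt (1 / (2 * m + 1)) := by
    intro m
    have := Real.sqrt_le_sqrt (dd_sq_le m)
    rwa [Real.sqrt_sq (dd_nonneg m)] at this
  have h1 : Filter.Tendsto (fun m : ℕ => (2 * (m:ℝ) + 1)) Filter.atTop Filter.atTop := by
    apply Filter.tendsto_atTop_add_const_right
    exact (tendsto_natCast_atTop_atTop (R := ℝ)).const_mul_atTop two_pos
  have h2 : Filter.Tendsto (fun m : ℕ => 1 / (2 * (m:ℝ) + 1)) Filter.atTop (nhds 0) := by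
    simpa [one_div, Pi.inv_def] using h1.inv_tendsto_atTop
  have h3 : Filter.Tendsto (fun m : ℕ => Real.sqrt (1 / (2 * (m:ℝ) + 1))) Filter.atTop (nhds 0) := by
    have h := (Real.continuous_sqrt.tendsto 0).comp h2
    rw [Real.sqrt_zero] at h
    exact h
  exact squeeze_zero dd_nonneg hupper h3

lemma desc_two (N : ℕ) : N.descFactorial 2 = N * (N - 1) := by
  simp [Nat.descFactorial, Nat.mul_comm]

/-- For the Shuffle task with `k = 2` and `n = 2m` even: the `n/2` steps
each fill `2` positions independently and uniformly from the `n - 2i` remaining items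
(step `i` 0-indexed, modelled as a uniformly random element of `Fin 2 → Fin (n - 2i)`),
and success means the two samples are distinct at every step. The success probability is
`(n-1)‼ / n‼`, and this tends to `0` as `n → ∞`. -/
theorem stmt_13 :
    (∀ m : ℕ, 0 < m →
      ((Nat.card {ω : ∀ i : Fin (2 * m / 2), Fin 2 → Fin (2 * m - (i : ℕ) * 2) //
          ∀ i, Function.Injective (ω i)} : ℝ)
        / (Nat.card (∀ i : Fin (2 * m / 2), Fin 2 → Fin (2 * m - (i : ℕ) * 2)) : ℝ))
        = (Nat.doubleFactorial (2 * m - 1) : ℝ) / (Nat.doubleFactorial (2 * m) : ℝ))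
    ∧ Filter.Tendsto
        (fun m : ℕ => (Nat.doubleFactorial (2 * m - 1) : ℝ) / (Nat.doubleFactorial (2 * m) : ℝ))
        Filter.atTop (nhds 0) := by
  constructor
  · intro m hm
    have h2 : 2 * m / 2 = m := by omega
    rw [h2]
    have hnum : Nat.card {ω : ∀ i : Fin m, Fin 2 → Fin (2 * m - (i : ℕ) * 2) //
        ∀ i, Function.Injective (ω i)}
        = ∏ i : Fin m, (2 * m - (i : ℕ) * 2).descFactorial 2 := by
      rw [Nat.card_congr (Equiv.subtypePiEquivPi), Nat.card_pi]
      exact Finset.prod_congr rfl fun i _ => card_inj_fun _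
    have hden : Nat.card (∀ i : Fin m, Fin 2 → Fin (2 * m - (i : ℕ) * 2))
        = ∏ i : Fin m, (2 * m - (i : ℕ) * 2) ^ 2 := by
      rw [Nat.card_pi]
      refine Finset.prod_congr rfl fun i _ => ?_
      rw [Nat.card_eq_fintype_card, Fintype.card_fun, Fintype.card_fin, Fintype.card_fin]
    have hsplit : (∏ i : Fin m, (2 * m - (i : ℕ) * 2).descFactorial 2)
        = Nat.doubleFactorial (2 * m) * Nat.doubleFactorial (2 * m - 1) := by
      rw [← prod_even m, ← prod_odd m, ← Finset.prod_mul_distrib]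
      refine Finset.prod_congr rfl fun i _ => ?_
      rw [desc_two, mul_comm ((i:ℕ)) 2]
    have hsq : (∏ i : Fin m, (2 * m - (i : ℕ) * 2) ^ 2)
        = (Nat.doubleFactorial (2 * m)) ^ 2 := by
      rw [← prod_even m, ← Finset.prod_pow]
      exact Finset.prod_congr rfl fun i _ => by rw [mul_comm ((i:ℕ)) 2]
    rw [hnum, hden, hsplit, hsq]
    have hA : ((Nat.doubleFactorial (2 * m)) : ℝ) ≠ 0 := by
      exact_mod_cast (Nat.doubleFactorial_pos _).ne'
    push_cast
    rw [pow_two, mul_div_mul_left _ _ hA]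
  · exact dd_tendsto
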